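/- arXiv:0812.1817 — 6 statements merged into one kernel-verified Lean document; each statement's English description precedes it below -/
import Mathlib

section
/- Let A, B, C be n×n complex matrices with A Hermitian and B skew-Hermitian. Let F = (C+C*)/2 and G = -i(C-C*)/2, and let U, V be unitaries such that U F U* = diag(f_1,...,f_n) with f_1 ≥ ... ≥ f_n and V G V* = diag(g_1,...,g_n) with g_1 ≥ ... ≥ g_n. Let A have eigenvalues a_1 ≥ ... ≥ a_n and let -iB have eigenvalues b_1 ≥ ... ≥ b_n, and let A_1 = diag(a_1,...,a_n), B_1 = i·diag(b_1,...,b_n). Then ‖U*A_1U + V*B_1V − C‖² = Σ_j (|f_j − a_j|² + |g_j − b_j|²) in the Frobenius norm. -/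
open Matrix

lemma aux_conj {n : ℕ} (U X D : Matrix (Fin n) (Fin n) ℂ) (h1 : Uᴴ * U = 1)
    (h : U * X * Uᴴ = D) : X = Uᴴ * D * U := by
  rw [← h]
  calc X = (Uᴴ * U) * X * (Uᴴ * U) := by rw [h1]; simp
  _ = Uᴴ * (U * X * Uᴴ) * U := by simp only [mul_assoc]


/-- Squared Frobenius norm of a complex matrix. -/
noncomputable def frobSq {n : ℕ} (X : Matrix (Fin n) (Fin n) ℂ) : ℝ :=
  (Matrix.trace (Xᴴ * X)).re

theorem stmt0 {n : ℕ} (A B C : Matrix (Fin n) (Fin n) ℂ)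
    (hA : A.IsHermitian) (hB : Bᴴ = -B)
    (f g a b : Fin n → ℝ)
    (hf : Antitone f) (hg : Antitone g) (ha : Antitone a) (hb : Antitone b)
    (U V : Matrix (Fin n) (Fin n) ℂ)
    (hU : U ∈ Matrix.unitaryGroup (Fin n) ℂ) (hV : V ∈ Matrix.unitaryGroup (Fin n) ℂ)
    (hUF : U * ((1 / 2 : ℂ) • (C + Cᴴ)) * Uᴴ = Matrix.diagonal (fun i => (f i : ℂ)))
    (hVG : V * ((-Complex.I / 2 : ℂ) • (C - Cᴴ)) * Vᴴ = Matrix.diagonal (fun i => (g i : ℂ)))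
    (haA : ∃ W ∈ Matrix.unitaryGroup (Fin n) ℂ,
      W * A * Wᴴ = Matrix.diagonal (fun i => (a i : ℂ)))
    (hbB : ∃ W ∈ Matrix.unitaryGroup (Fin n) ℂ,
      W * ((-Complex.I) • B) * Wᴴ = Matrix.diagonal (fun i => (b i : ℂ))) :
    frobSq (Uᴴ * Matrix.diagonal (fun i => (a i : ℂ)) * U +
        Vᴴ * (Complex.I • Matrix.diagonal (fun i => (b i : ℂ))) * V - C) =
      ∑ j, ((f j - a j) ^ 2 + (g j - b j) ^ 2) := by
  obtain ⟨hU1, hU2⟩ := hU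
  obtain ⟨hV1, hV2⟩ := hV
  rw [Matrix.star_eq_conjTranspose] at hU1 hU2 hV1 hV2
  set Df : Matrix (Fin n) (Fin n) ℂ := Matrix.diagonal (fun i => (f i : ℂ)) with hDf
  set Dg : Matrix (Fin n) (Fin n) ℂ := Matrix.diagonal (fun i => (g i : ℂ)) with hDg
  set Da : Matrix (Fin n) (Fin n) ℂ := Matrix.diagonal (fun i => (a i : ℂ)) with hDa
  set Db : Matrix (Fin n) (Fin n) ℂ := Matrix.diagonal (fun i => (b i : ℂ)) with hDb
  have hF : (1 / 2 : ℂ) • (C + Cᴴ) = Uᴴ * Df * U := aux_conj _ _ _ hU1 hUF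
  have hG : (-Complex.I / 2 : ℂ) • (C - Cᴴ) = Vᴴ * Dg * V := aux_conj _ _ _ hV1 hVG
  have hC : C = Uᴴ * Df * U + Complex.I • (Vᴴ * Dg * V) := by
    rw [← hF, ← hG, smul_smul]
    have h2 : Complex.I * (-Complex.I / 2) = 1 / 2 := by
      field_simp
      simp [Complex.I_sq]
    rw [h2]
    module
  have hPH : (Da - Df)ᴴ = Da - Df := by
    rw [hDa, hDf, Matrix.diagonal_sub, Matrix.diagonal_conjTranspose]
    have hst : (star fun i => ((a i : ℂ) - f i)) = fun i => ((a i : ℂ) - f i) := by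
      funext i
      simp [Pi.star_apply, star_sub, Complex.star_def, Complex.conj_ofReal]
    rw [hst]
  have hQH : (Db - Dg)ᴴ = Db - Dg := by
    rw [hDb, hDg, Matrix.diagonal_sub, Matrix.diagonal_conjTranspose]
    have hst : (star fun i => ((b i : ℂ) - g i)) = fun i => ((b i : ℂ) - g i) := by
      funext i
      simp [Pi.star_apply, star_sub, Complex.star_def, Complex.conj_ofReal]
    rw [hst]
  set P := Da - Df with hPdef
  set Q := Db - Dg with hQdef
  set H := Uᴴ * P * U with hH
  set S := Vᴴ * Q * V with hS
  have hM : Uᴴ * Da * U + Vᴴ * (Complex.I • Db) * V - C = H + Complex.I • S := by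
    rw [hC, hH, hS, hPdef, hQdef]
    simp only [Matrix.mul_sub, Matrix.sub_mul, Matrix.mul_smul, Matrix.smul_mul, smul_sub]
    abel
  rw [hM]
  have hMH : (H + Complex.I • S)ᴴ = H - Complex.I • S := by
    rw [conjTranspose_add, conjTranspose_smul, hH, hS]
    simp only [conjTranspose_mul, conjTranspose_conjTranspose, hPH, hQH, mul_assoc,
      Complex.star_def, Complex.conj_I, neg_smul, sub_eq_add_neg]
  unfold frobSq
  rw [hMH]
  have key : Matrix.trace ((H - Complex.I • S) * (H + Complex.I • S))
      = Matrix.trace (H * H) + Matrix.trace (S * S) := by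
    simp only [Matrix.sub_mul, Matrix.mul_add, Matrix.smul_mul, Matrix.mul_smul, smul_smul,
      Complex.I_mul_I, trace_sub, trace_add, trace_smul, neg_smul, one_smul, trace_neg,
      smul_eq_mul]
    rw [Matrix.trace_mul_comm S H]
    ring_nf
    rw [Complex.I_sq]
    ring
  have sq1 : H * H = Uᴴ * (P * P) * U := by
    rw [hH]
    have h3 : U * (Uᴴ * (P * U)) = P * U := by rw [← mul_assoc, hU2, one_mul]
    simp only [mul_assoc, h3]
  have sq2 : S * S = Vᴴ * (Q * Q) * V := by
    rw [hS]
    have h3 : V * (Vᴴ * (Q * V)) = Q * V := by rw [← mul_assoc, hV2, one_mul]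
    simp only [mul_assoc, h3]
  have tr1 : Matrix.trace (H * H) = ∑ j, ((a j : ℂ) - f j) ^ 2 := by
    rw [sq1, mul_assoc, Matrix.trace_mul_comm, mul_assoc, hU2, mul_one, hPdef, hDa, hDf]
    rw [Matrix.diagonal_sub, Matrix.diagonal_mul_diagonal, Matrix.trace_diagonal]
    exact Finset.sum_congr rfl fun j _ => by simp [sq]
  have tr2 : Matrix.trace (S * S) = ∑ j, ((b j : ℂ) - g j) ^ 2 := by
    rw [sq2, mul_assoc, Matrix.trace_mul_comm, mul_assoc, hV2, mul_one, hQdef, hDb, hDg]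
    rw [Matrix.diagonal_sub, Matrix.diagonal_mul_diagonal, Matrix.trace_diagonal]
    exact Finset.sum_congr rfl fun j _ => by simp [sq]
  rw [key, tr1, tr2]
  have final : (∑ j, ((a j : ℂ) - f j) ^ 2) + ∑ j, ((b j : ℂ) - g j) ^ 2
      = ((∑ j, ((f j - a j) ^ 2 + (g j - b j) ^ 2) : ℝ) : ℂ) := by
    rw [← Finset.sum_add_distrib]
    push_cast
    exact Finset.sum_congr rfl fun j _ => by ring
  rw [final, Complex.ofReal_re]
end

section
/- Let a_0, a_1, ..., a_N be positive real numbers. There exist real numbers t_1, ..., t_N such that a_0 = Σ_{j=1}^N a_j e^{i t_j} if and only if for every k ∈ {0, 1, ..., N}, Σ_{j=0}^N a_j − 2 a_k ≥ 0. -/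
open Complex Finset

lemma tri (p q c : ℝ) (hp : 0 ≤ p) (hq : 0 ≤ q) (h1 : |p - q| ≤ c) (h2 : c ≤ p + q) :
    ∃ α β : ℝ, (c : ℂ) = p * Complex.exp (Complex.I * α) + q * Complex.exp (Complex.I * β) := by
  have h1a : p - q ≤ c := le_trans (le_abs_self _) h1
  have h1b : q - p ≤ c := by
    rw [abs_sub_comm] at h1
    exact le_trans (le_abs_self _) h1
  have hc0 : 0 ≤ c := le_trans (abs_nonneg _) h1
  rcases eq_or_lt_of_le hc0 with hc | hc
  · -- c = 0, so p = q
    have hpq : p = q := by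
      have := abs_le.mp (h1.trans hc.symm.le)
      linarith [this.1, this.2]
    refine ⟨0, Real.pi, ?_⟩
    rw [mul_comm Complex.I (Real.pi : ℂ)]
    simp [Complex.exp_pi_mul_I, hpq, ← hc]
  rcases eq_or_lt_of_le hp with hpz | hpz
  · -- p = 0 so c = q
    have hcq : c = q := by
      have : |0 - q| = q := by rw [abs_sub_comm]; simpa using hq
      rw [← hpz] at h1a h1b h2
      linarith
    refine ⟨0, 0, ?_⟩
    simp [← hpz, hcq]
  · -- main case
    set u : ℝ := (c^2 + p^2 - q^2) / (2 * p * c) with hu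
    have hpc : 0 < 2 * p * c := by positivity
    have hu1 : -1 ≤ u := by
      rw [hu, le_div_iff₀ hpc]
      nlinarith
    have hu2 : u ≤ 1 := by
      rw [hu, div_le_one hpc]
      nlinarith
    set α := Real.arccos u with hα
    have hcos : Real.cos α = u := Real.cos_arccos hu1 hu2
    set z : ℂ := (c : ℂ) - p * Complex.exp ((α : ℂ) * Complex.I) with hz
    have hre : z.re = c - p * Real.cos α := by
      simp [hz, Complex.exp_ofReal_mul_I_re]
    have him : z.im = -(p * Real.sin α) := by
      simp [hz, Complex.exp_ofReal_mul_I_im]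
    have hnsq : Complex.normSq z = q^2 := by
      rw [Complex.normSq_apply, hre, him]
      have hs := Real.sin_sq_add_cos_sq α
      have : c - p * Real.cos α = c - p * u := by rw [hcos]
      rw [hcos] at *
      field_simp [hu] at *
      nlinarith [Real.sin_sq_add_cos_sq α]
    have habs : ‖z‖ = q := by
      have h := Complex.sq_norm z
      rw [hnsq] at h
      nlinarith [norm_nonneg z]
    refine ⟨α, z.arg, ?_⟩
    have hzq : (q : ℂ) * Complex.exp (Complex.I * z.arg) = z := by
      rw [mul_comm Complex.I (z.arg : ℂ), ← habs]
      exact Complex.norm_mul_exp_arg_mul_I z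
    rw [hzq, mul_comm Complex.I (α : ℂ), hz]
    ring

lemma key : ∀ (N : ℕ) (a : ℕ → ℝ), (∀ j, 0 ≤ a j) → ∀ r : ℝ, 0 ≤ r →
    r ≤ ∑ j ∈ Finset.range N, a j →
    (∀ j < N, 2 * a j ≤ r + ∑ j ∈ Finset.range N, a j) →
    ∃ t : ℕ → ℝ, (r : ℂ) = ∑ j ∈ Finset.range N, (a j : ℂ) * Complex.exp (Complex.I * t j) := by
  intro N
  induction N with
  | zero =>
    intro a ha r hr hrb _
    refine ⟨fun _ => 0, ?_⟩
    simp only [Finset.range_zero, Finset.sum_empty] at hrb ⊢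
    exact_mod_cast le_antisymm hrb hr
  | succ n ih =>
    match n, ih with
    | 0, _ =>
      intro a ha r hr hrb hk
      rw [Finset.sum_range_one] at hrb
      have h0 := hk 0 (by norm_num)
      rw [Finset.sum_range_one] at h0
      have hra : r = a 0 := by linarith
      refine ⟨fun _ => 0, ?_⟩
      simp [hra]
    | (m+1), ih =>
      intro a ha r hr hrb hk
      set b := ∑ j ∈ Finset.range (m+2), a j with hb
      set p := a m with hpdef
      set q := a (m+1) with hqdef
      have hbsplit : b = (∑ j ∈ Finset.range m, a j) + p + q := by
        rw [hb, Finset.sum_range_succ, Finset.sum_range_succ]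
      have hsm : 0 ≤ ∑ j ∈ Finset.range m, a j := Finset.sum_nonneg fun j _ => ha j
      have hdb : p + q ≤ b := by rw [hbsplit]; linarith
      have h2p : 2 * p ≤ r + b := hk m (by omega)
      have h2q : 2 * q ≤ r + b := hk (m+1) (by omega)
      set c := min (r + b - (p + q)) (p + q) with hc
      have hc0 : 0 ≤ c := le_min (by linarith) (by linarith [ha m, ha (m+1)])
      have hcd : c ≤ p + q := min_le_right _ _
      have hcu : c ≤ r + b - (p + q) := min_le_left _ _
      have hce : |p - q| ≤ c := by
        apply le_min
        · rw [abs_le]; exact ⟨by linarith, by linarith⟩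
        · rw [abs_le]; exact ⟨by linarith [ha m, ha (m+1)], by linarith [ha m, ha (m+1)]⟩
      -- new system
      set a' : ℕ → ℝ := fun j => if j = m then c else a j with ha'
      have ha'nn : ∀ j, 0 ≤ a' j := by
        intro j; rw [ha']; dsimp only; split
        · exact hc0
        · exact ha j
      have hsum' : ∑ j ∈ Finset.range (m+1), a' j = (∑ j ∈ Finset.range m, a j) + c := by
        rw [Finset.sum_range_succ]
        have h1 : ∑ j ∈ Finset.range m, a' j = ∑ j ∈ Finset.range m, a j :=
          Finset.sum_congr rfl fun j hj => by
            have hne : j ≠ m := by simp only [Finset.mem_range] at hj; omega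
            simp [ha', hne]
        rw [h1]
        simp [ha']
      have hb' : ∑ j ∈ Finset.range (m+1), a' j = b - (p + q) + c := by
        rw [hsum', hbsplit]; ring
      have hclow : r - b + (p + q) ≤ c := le_min (by linarith) (by linarith)
      have hr' : r ≤ ∑ j ∈ Finset.range (m+1), a' j := by rw [hb']; linarith
      have hk' : ∀ j < m + 1, 2 * a' j ≤ r + ∑ j ∈ Finset.range (m+1), a' j := by
        intro j hj
        rw [hb', ha']; dsimp only
        rcases eq_or_ne j m with hjm | hjm
        · rw [if_pos hjm]; linarith
        · rw [if_neg hjm]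
          have hjlt : j < m := by omega
          have haj : a j ≤ ∑ i ∈ Finset.range m, a i :=
            Finset.single_le_sum (fun i _ => ha i) (Finset.mem_range.mpr hjlt)
          have hab : a j + (p + q) ≤ b := by rw [hbsplit]; linarith
          have h2j := hk j (by omega)
          have hclow2 : 2 * a j - r - b + (p + q) ≤ c := le_min (by linarith) (by linarith)
          linarith
      obtain ⟨t', ht'⟩ := ih a' ha'nn r hr hr' hk'
      rw [Finset.sum_range_succ] at ht'
      have hsum'' : ∑ j ∈ Finset.range m, (a' j : ℂ) * Complex.exp (Complex.I * t' j)
          = ∑ j ∈ Finset.range m, (a j : ℂ) * Complex.exp (Complex.I * t' j) := by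
        refine Finset.sum_congr rfl fun j hj => ?_
        rw [ha']; dsimp only
        rw [if_neg (by simp at hj; omega : j ≠ m)]
      have ha'm : a' m = c := by rw [ha']; simp
      rw [hsum'', ha'm] at ht'
      obtain ⟨α, β, hαβ⟩ := tri p q c (ha m) (ha (m+1)) hce hcd
      set θ := t' m with hθ
      refine ⟨fun j => if j = m then α + θ else if j = m+1 then β + θ else t' j, ?_⟩
      rw [Finset.sum_range_succ, Finset.sum_range_succ]
      have e1 : ∑ j ∈ Finset.range m, (a j : ℂ) *
            Complex.exp (Complex.I * (if j = m then α + θ else if j = m+1 then β + θ else t' j))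
          = ∑ j ∈ Finset.range m, (a j : ℂ) * Complex.exp (Complex.I * t' j) := by
        refine Finset.sum_congr rfl fun j hj => ?_
        simp only [Finset.mem_range] at hj
        rw [if_neg (by omega), if_neg (by omega)]
      rw [e1]
      beta_reduce
      rw [show (if m = m then α + θ else if m = m + 1 then β + θ else t' m) = α + θ from if_pos rfl,
        show (if m + 1 = m then α + θ else if m + 1 = m + 1 then β + θ else t' (m+1)) = β + θ by
          rw [if_neg (by omega), if_pos rfl]]
      have hexp : ∀ x : ℝ, Complex.exp (Complex.I * ((x : ℝ) + θ : ℝ))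
          = Complex.exp (Complex.I * x) * Complex.exp (Complex.I * θ) := by
        intro x
        rw [← Complex.exp_add]
        push_cast
        ring_nf
      rw [hexp α, hexp β, ht']
      have : ((c : ℂ)) * Complex.exp (Complex.I * θ)
          = ((p:ℂ) * Complex.exp (Complex.I * α) + (q:ℂ) * Complex.exp (Complex.I * β)) * Complex.exp (Complex.I * θ) := by
        rw [← hαβ]
      rw [this]
      ring

theorem stmt3 {N : ℕ} (a : Fin (N + 1) → ℝ) (ha : ∀ k, 0 < a k) :
    (∃ t : Fin N → ℝ,
        (a 0 : ℂ) = ∑ j : Fin N, (a j.succ : ℂ) * Complex.exp (Complex.I * t j)) ↔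
      ∀ k : Fin (N + 1), 0 ≤ (∑ j, a j) - 2 * a k := by
  have hnorm : ∀ (x : ℝ) (u : ℝ), ‖(x : ℂ) * Complex.exp (Complex.I * u)‖ = |x| := by
    intro x u
    rw [norm_mul, Complex.norm_real, Real.norm_eq_abs, mul_comm Complex.I (u : ℂ), Complex.norm_exp_ofReal_mul_I, mul_one]
  have hsumsplit : (∑ j, a j) = a 0 + ∑ j : Fin N, a j.succ := Fin.sum_univ_succ a
  constructor
  · rintro ⟨t, ht⟩ k
    rw [hsumsplit]
    induction k using Fin.cases with
    | zero =>
      have h1 : a 0 ≤ ∑ j : Fin N, a j.succ := by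
        have := congrArg (‖·‖) ht
        rw [Complex.norm_real, Real.norm_eq_abs, abs_of_pos (ha 0)] at this
        calc a 0 = ‖∑ j : Fin N, (a j.succ : ℂ) * Complex.exp (Complex.I * t j)‖ := this
        _ ≤ ∑ j : Fin N, ‖(a j.succ : ℂ) * Complex.exp (Complex.I * t j)‖ :=
            norm_sum_le _ _
        _ = ∑ j : Fin N, a j.succ := by
            refine Finset.sum_congr rfl fun j _ => ?_
            rw [hnorm, abs_of_pos (ha j.succ)]
      linarith
    | succ k =>
      have hsplit : ∑ j : Fin N, (a j.succ : ℂ) * Complex.exp (Complex.I * t j)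
          = (∑ j ∈ Finset.univ.erase k, (a j.succ : ℂ) * Complex.exp (Complex.I * t j))
            + (a k.succ : ℂ) * Complex.exp (Complex.I * t k) := by
        rw [Finset.sum_erase_add _ _ (Finset.mem_univ k)]
      have hcl : (a k.succ : ℂ) * Complex.exp (Complex.I * t k)
          = (a 0 : ℂ) - ∑ j ∈ Finset.univ.erase k, (a j.succ : ℂ) * Complex.exp (Complex.I * t j) := by
        rw [ht, hsplit]; ring
      have h2 : a k.succ ≤ a 0 + ∑ j ∈ Finset.univ.erase k, a j.succ := by
        have := congrArg (‖·‖) hcl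
        rw [hnorm, abs_of_pos (ha k.succ)] at this
        calc a k.succ
            = ‖(a 0 : ℂ) - ∑ j ∈ Finset.univ.erase k, (a j.succ : ℂ) * Complex.exp (Complex.I * t j)‖ := this
          _ ≤ ‖(a 0 : ℂ)‖ + ‖∑ j ∈ Finset.univ.erase k, (a j.succ : ℂ) * Complex.exp (Complex.I * t j)‖ :=
              by
                rw [sub_eq_add_neg]
                exact (norm_add_le _ _).trans (by rw [norm_neg])
          _ ≤ a 0 + ∑ j ∈ Finset.univ.erase k, a j.succ := by
              gcongr
              · rw [Complex.norm_real, Real.norm_eq_abs, abs_of_pos (ha 0)]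
              · calc ‖∑ j ∈ Finset.univ.erase k, (a j.succ : ℂ) * Complex.exp (Complex.I * t j)‖
                    ≤ ∑ j ∈ Finset.univ.erase k, ‖(a j.succ : ℂ) * Complex.exp (Complex.I * t j)‖ :=
                      norm_sum_le _ _
                  _ = ∑ j ∈ Finset.univ.erase k, a j.succ := by
                      refine Finset.sum_congr rfl fun j _ => ?_
                      rw [hnorm, abs_of_pos (ha j.succ)]
      have h3 : (∑ j ∈ Finset.univ.erase k, a j.succ) + a k.succ = ∑ j : Fin N, a j.succ :=
        Finset.sum_erase_add _ _ (Finset.mem_univ k)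
      linarith
  · intro hcond
    -- use key
    set A : ℕ → ℝ := fun j => if h : j + 1 < N + 1 then a ⟨j + 1, h⟩ else 0 with hA
    have hAnn : ∀ j, 0 ≤ A j := by
      intro j; rw [hA]; dsimp only; split
      · exact (ha _).le
      · exact le_rfl
    have hAsum : ∑ j ∈ Finset.range N, A j = ∑ j : Fin N, a j.succ := by
      rw [Finset.sum_range]
      refine Finset.sum_congr rfl fun j _ => ?_
      rw [hA]; dsimp only
      rw [dif_pos (by omega : (j : ℕ) + 1 < N + 1)]
      congr 1
    have h0 := hcond 0
    rw [hsumsplit] at h0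
    obtain ⟨t, ht⟩ := key N A hAnn (a 0) (ha 0).le (by rw [hAsum]; linarith) (by
      intro j hj
      rw [hAsum, hA]; dsimp only
      rw [dif_pos (by omega : j + 1 < N + 1)]
      have := hcond ⟨j + 1, by omega⟩
      rw [hsumsplit] at this
      linarith)
    refine ⟨fun j => t j, ?_⟩
    rw [ht, Finset.sum_range]
    refine Finset.sum_congr rfl fun j _ => ?_
    rw [hA]; dsimp only
    rw [dif_pos (by omega : (j : ℕ) + 1 < N + 1)]
    congr 1
end

section
/- Let A_j = diag(a_{1j}, ..., a_{nj}) be nonnegative real diagonal n×n matrices for j = 0, 1, ..., N. There exist permutation matrices P_1, ..., P_N and diagonal unitary matrices D_1, ..., D_N such that A_0 = Σ_{j=1}^N D_j P_j A_j P_j^t if and only if for each row index i, the entries a_{i0}, (P_1 v_1)_i, ..., (P_N v_N)_i (where v_j = (a_{1j},...,a_{nj})^t) satisfy the polygon inequalities: each entry is at most the sum of the others. -/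
open Matrix

lemma triangle0 (x y b : ℝ) (hx : 0 ≤ x) (hy : 0 ≤ y) (hb : 0 ≤ b)
    (h1 : b ≤ x + y) (h2 : x ≤ b + y) (h3 : y ≤ b + x) :
    ∃ z w : ℂ, ‖z‖ = 1 ∧ ‖w‖ = 1 ∧ (b : ℂ) = x * z + y * w := by
  rcases eq_or_lt_of_le hx with hx0 | hx
  · -- x = 0, b = y
    have : b = y := le_antisymm (by linarith) (by linarith)
    exact ⟨1, 1, by simp, by simp, by simp [← hx0, this]⟩
  rcases eq_or_lt_of_le hy with hy0 | hy
  · have : b = x := le_antisymm (by linarith) (by linarith)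
    exact ⟨1, 1, by simp, by simp, by simp [← hy0, this]⟩
  rcases eq_or_lt_of_le hb with hb0 | hb
  · have hxy : x = y := le_antisymm (by linarith) (by linarith)
    refine ⟨1, -1, by simp, by simp, ?_⟩
    simp [← hb0, hxy]
  · set c : ℝ := (b ^ 2 + x ^ 2 - y ^ 2) / (2 * x * b) with hc
    have hx0 : (0:ℝ) < 2 * x * b := by positivity
    have hc1 : c ≤ 1 := by
      rw [hc, div_le_one hx0]; nlinarith
    have hc2 : -1 ≤ c := by
      rw [hc, le_div_iff₀ hx0]; nlinarith
    have hcsq : 0 ≤ 1 - c ^ 2 := by nlinarith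
    set z : ℂ := ⟨c, Real.sqrt (1 - c ^ 2)⟩ with hz
    have hsq : Real.sqrt (1 - c ^ 2) ^ 2 = 1 - c ^ 2 := Real.sq_sqrt hcsq
    have hznorm : ‖z‖ = 1 := by
      rw [Complex.norm_def, Complex.normSq_mk]
      rw [show c * c + Real.sqrt (1 - c ^ 2) * Real.sqrt (1 - c ^ 2)
        = c ^ 2 + Real.sqrt (1 - c ^ 2) ^ 2 by ring, hsq]
      simp
    set w : ℂ := ((b : ℂ) - x * z) / y with hw
    have hwnum : ((b:ℂ) - x * z) = ⟨b - x * c, -(x * Real.sqrt (1 - c ^ 2))⟩ := by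
      apply Complex.ext <;> simp [hz]
    have hwnorm : ‖w‖ = 1 := by
      rw [hw, norm_div, hwnum, Complex.norm_def, Complex.normSq_mk]
      have : (b - x * c) * (b - x * c) + -(x * Real.sqrt (1 - c ^ 2)) * -(x * Real.sqrt (1 - c ^ 2))
          = b ^ 2 - 2 * b * x * c + x ^ 2 * (c ^ 2 + Real.sqrt (1 - c ^ 2) ^ 2) := by ring
      rw [this, hsq]
      have : b ^ 2 - 2 * b * x * c + x ^ 2 * (c ^ 2 + (1 - c ^ 2)) = y ^ 2 := by
        rw [hc]; field_simp; ring
      rw [this, Real.sqrt_sq hy.le]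
      simp [abs_of_pos hy]
      exact hy.ne'
    refine ⟨z, w, hznorm, hwnorm, ?_⟩
    have hy' : (y : ℂ) ≠ 0 := by exact_mod_cast hy.ne'
    rw [hw]
    field_simp
    ring

lemma polyFin : ∀ (m : ℕ) (c : Fin m → ℝ) (a : ℝ), 0 ≤ a → (∀ j, 0 ≤ c j) →
    a ≤ ∑ j, c j → (∀ j, 2 * c j ≤ a + ∑ i, c i) →
    ∃ z : Fin m → ℂ, (∀ j, ‖z j‖ = 1) ∧ (a : ℂ) = ∑ j, (c j : ℂ) * z j := by
  intro m
  induction m using Nat.strong_induction_on with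
  | _ m IH =>
    intro c a ha hnn h0 hk
    match m with
    | 0 =>
      have : a = 0 := le_antisymm (by simpa using h0) ha
      exact ⟨Fin.elim0, fun j => j.elim0, by simp [this]⟩
    | 1 =>
      have hax : a = c 0 := by
        have h1 := h0; have h2 := hk 0
        simp [Fin.sum_univ_one] at h1 h2
        linarith
      exact ⟨fun _ => 1, fun _ => by simp, by simp [Fin.sum_univ_one, hax]⟩
    | m + 2 =>
      set x := c 0 with hxdef
      set y := c 1 with hydef
      set rest : Fin m → ℝ := fun j => c j.succ.succ with hrdef
      have hx : 0 ≤ x := hnn 0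
      have hy : 0 ≤ y := hnn 1
      have hrnn : ∀ j, 0 ≤ rest j := fun j => hnn _
      have hrs : 0 ≤ ∑ j, rest j := Finset.sum_nonneg fun j _ => hrnn j
      have hsum : ∑ j, c j = x + y + ∑ j, rest j := by
        rw [Fin.sum_univ_succ, Fin.sum_univ_succ]
        simp [hrdef]; ring
      set b : ℝ := min (x + y) (a + ∑ j, rest j) with hbdef
      have hb0 : 0 ≤ b := le_min (by linarith) (by linarith)
      have hble : b ≤ x + y := min_le_left _ _
      have hble2 : b ≤ a + ∑ j, rest j := min_le_right _ _
      have h0' := h0; rw [hsum] at h0'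
      have hkx := hk 0; have hky := hk 1
      rw [hsum] at hkx hky
      rw [← hxdef] at hkx; rw [← hydef] at hky
      have hbge1 : x - y ≤ b := le_min (by linarith) (by linarith)
      have hbge2 : y - x ≤ b := le_min (by linarith) (by linarith)
      have hbge3 : a - ∑ j, rest j ≤ b := le_min (by linarith) (by linarith)
      set c' : Fin (m + 1) → ℝ := Fin.cons b rest with hc'def
      have hc'sum : ∑ j, c' j = b + ∑ j, rest j := by
        rw [Fin.sum_univ_succ]; simp [hc'def]
      obtain ⟨z, hz1, hz2⟩ := IH (m + 1) (by omega) c' a ha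
        (fun j => by
          refine Fin.cases ?_ (fun i => ?_) j
          · simpa [hc'def] using hb0
          · simpa [hc'def] using hrnn i)
        (by rw [hc'sum]; linarith)
        (fun j => by
          rw [hc'sum]
          refine Fin.cases ?_ (fun i => ?_) j
          · simp only [hc'def, Fin.cons_zero]; linarith
          · simp only [hc'def, Fin.cons_succ]
            have hw1 := hk i.succ.succ; rw [hsum] at hw1
            have hw2 : rest i ≤ ∑ j, rest j :=
              Finset.single_le_sum (fun j _ => hrnn j) (Finset.mem_univ i)
            rcases min_cases (x + y) (a + ∑ j, rest j) with ⟨hb, _⟩ | ⟨hb, _⟩ <;>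
              rw [hbdef, hb] <;> [linarith; linarith])
      obtain ⟨u, v, hu, hv, huv⟩ := triangle0 x y b hx hy hb0 hble (by linarith) (by linarith)
      refine ⟨Fin.cons (u * z 0) (Fin.cons (v * z 0) (fun j => z j.succ)), ?_, ?_⟩
      · intro j
        refine Fin.cases ?_ (fun i => ?_) j
        · simp [hu, hz1 0]
        · refine Fin.cases ?_ (fun i2 => ?_) i
          · simp [hv, hz1 0]
          · simp [hz1]
      · rw [hz2]
        simp only [Fin.sum_univ_succ, hc'def, Fin.cons_zero, Fin.cons_succ,
          Fin.succ_zero_eq_one, hrdef]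
        rw [huv]
        ring

lemma keyIff (m : ℕ) (c : Fin (m + 1) → ℝ) (hc : ∀ k, 0 ≤ c k) :
    (∃ t : Fin m → ℝ, (c 0 : ℂ) = ∑ j : Fin m, Complex.exp (Complex.I * t j) * (c j.succ : ℂ)) ↔
      ∀ k, 2 * c k ≤ ∑ l, c l := by
  have hsum : ∑ l, c l = c 0 + ∑ j : Fin m, c j.succ := Fin.sum_univ_succ c
  constructor
  · rintro ⟨t, ht⟩ k
    have habs : ∀ j, ‖Complex.exp (Complex.I * t j)‖ = 1 := fun j => by
      rw [mul_comm]; exact Complex.norm_exp_ofReal_mul_I _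
    refine Fin.cases ?_ (fun i => ?_) k
    · have h1 : c 0 ≤ ∑ j : Fin m, c j.succ := by
        calc c 0 = ‖(c 0 : ℂ)‖ := by
              rw [Complex.norm_real, Real.norm_of_nonneg (hc 0)]
          _ = ‖∑ j, Complex.exp (Complex.I * t j) * (c j.succ : ℂ)‖ := by rw [ht]
          _ ≤ ∑ j, ‖Complex.exp (Complex.I * t j) * (c j.succ : ℂ)‖ := by
              exact norm_sum_le _ _
          _ = ∑ j : Fin m, c j.succ := by
              refine Finset.sum_congr rfl fun j _ => ?_
              rw [norm_mul, habs j, one_mul, Complex.norm_real, Real.norm_of_nonneg (hc _)]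
      rw [hsum]; linarith
    · have h1 : (c i.succ : ℂ) * Complex.exp (Complex.I * t i) =
          (c 0 : ℂ) - ∑ j ∈ Finset.univ.erase i, Complex.exp (Complex.I * t j) * (c j.succ : ℂ) := by
        rw [ht, ← Finset.add_sum_erase _ _ (Finset.mem_univ i)]; ring
      have h2 : c i.succ ≤ c 0 + ∑ j ∈ Finset.univ.erase i, c j.succ := by
        calc c i.succ = ‖(c i.succ : ℂ) * Complex.exp (Complex.I * t i)‖ := by
              rw [norm_mul, habs i, mul_one, Complex.norm_real, Real.norm_of_nonneg (hc _)]
          _ = ‖(c 0 : ℂ) -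
                ∑ j ∈ Finset.univ.erase i, Complex.exp (Complex.I * t j) * (c j.succ : ℂ)‖ := by
              rw [h1]
          _ ≤ ‖(c 0 : ℂ)‖ +
                ‖∑ j ∈ Finset.univ.erase i, Complex.exp (Complex.I * t j) * (c j.succ : ℂ)‖ :=
              norm_sub_le _ _
          _ ≤ c 0 + ∑ j ∈ Finset.univ.erase i, c j.succ := by
              gcongr
              · rw [Complex.norm_real, Real.norm_of_nonneg (hc 0)]
              · calc ‖∑ j ∈ Finset.univ.erase i, Complex.exp (Complex.I * t j) * (c j.succ : ℂ)‖
                    ≤ ∑ j ∈ Finset.univ.erase i, ‖Complex.exp (Complex.I * t j) * (c j.succ : ℂ)‖ :=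
                      norm_sum_le _ _
                  _ = ∑ j ∈ Finset.univ.erase i, c j.succ := by
                      refine Finset.sum_congr rfl fun j _ => ?_
                      rw [norm_mul, habs j, one_mul, Complex.norm_real, Real.norm_of_nonneg (hc _)]
      have h3 : ∑ j : Fin m, c j.succ = c i.succ + ∑ j ∈ Finset.univ.erase i, c j.succ :=
        (Finset.add_sum_erase _ _ (Finset.mem_univ i)).symm
      rw [hsum, h3]; linarith
  · intro h
    have h0 := h 0; rw [hsum] at h0
    obtain ⟨z, hz1, hz2⟩ := polyFin m (fun j => c j.succ) (c 0) (hc 0) (fun j => hc _)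
      (by linarith)
      (fun j => by have := h j.succ; rw [hsum] at this; linarith)
    refine ⟨fun j => (z j).arg, ?_⟩
    have hzj : ∀ j, Complex.exp (Complex.I * (z j).arg) = z j := fun j => by
      have h4 := Complex.norm_mul_exp_arg_mul_I (z j)
      have h5 : ‖z j‖ = 1 := hz1 j
      rw [h5] at h4
      rw [mul_comm]
      simpa using h4
    rw [hz2]
    exact Finset.sum_congr rfl fun j _ => by rw [hzj j, mul_comm]

lemma conjPerm {n : ℕ} (σ : Equiv.Perm (Fin n)) (d e : Fin n → ℂ) :
    Matrix.diagonal e * (σ.permMatrix ℂ) * Matrix.diagonal d * (σ.permMatrix ℂ)ᵀ =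
      Matrix.diagonal (fun i => e i * d (σ i)) := by
  have hT : (σ.permMatrix ℂ)ᵀ = σ.symm.toPEquiv.toMatrix := by
    rw [Equiv.Perm.permMatrix, ← PEquiv.toMatrix_symm, Equiv.toPEquiv_symm]
  have hmid : σ.permMatrix ℂ * Matrix.diagonal d * (σ.permMatrix ℂ)ᵀ
      = Matrix.diagonal (fun i => d (σ i)) := by
    rw [hT, Equiv.Perm.permMatrix, PEquiv.toMatrix_toPEquiv_mul, PEquiv.mul_toMatrix_toPEquiv,
      Equiv.symm_symm]
    ext i j
    by_cases h : i = j
    · subst h; simp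
    · simp only [Matrix.submatrix_apply, id_eq]
      rw [Matrix.diagonal_apply_ne _ (fun h' => h (σ.injective h')),
        Matrix.diagonal_apply_ne _ h]
  calc Matrix.diagonal e * σ.permMatrix ℂ * Matrix.diagonal d * (σ.permMatrix ℂ)ᵀ
      = Matrix.diagonal e * (σ.permMatrix ℂ * Matrix.diagonal d * (σ.permMatrix ℂ)ᵀ) := by
        rw [mul_assoc, mul_assoc, mul_assoc]
    _ = Matrix.diagonal e * Matrix.diagonal (fun i => d (σ i)) := by rw [hmid]
    _ = Matrix.diagonal (fun i => e i * d (σ i)) := Matrix.diagonal_mul_diagonal _ _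

theorem stmt5 {n N : ℕ} (a : Fin (N + 1) → Fin n → ℝ) (ha : ∀ j i, 0 ≤ a j i) :
    (∃ (σ : Fin N → Equiv.Perm (Fin n)) (t : Fin N → Fin n → ℝ),
        Matrix.diagonal (fun i => (a 0 i : ℂ)) =
          ∑ j : Fin N,
            Matrix.diagonal (fun i => Complex.exp (Complex.I * t j i)) *
              ((σ j).permMatrix ℂ) *
              Matrix.diagonal (fun i => (a j.succ i : ℂ)) *
              ((σ j).permMatrix ℂ)ᵀ) ↔
      ∃ σ : Fin N → Equiv.Perm (Fin n), ∀ i : Fin n, ∀ k : Fin (N + 1),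
        2 * (Fin.cases (motive := fun _ => ℝ) (a 0 i) (fun j => a j.succ ((σ j) i)) k) ≤
          ∑ l : Fin (N + 1), Fin.cases (motive := fun _ => ℝ) (a 0 i) (fun j => a j.succ ((σ j) i)) l := by
  constructor
  · rintro ⟨σ, t, hM⟩
    refine ⟨σ, fun i => ?_⟩
    have hM' : (a 0 i : ℂ) = ∑ j, Complex.exp (Complex.I * t j i) * (a j.succ (σ j i) : ℂ) := by
      have h1 : ∀ i k, Matrix.diagonal (fun i => (a 0 i : ℂ)) i k =
          (∑ j : Fin N,
            Matrix.diagonal (fun i => Complex.exp (Complex.I * t j i)) *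
              ((σ j).permMatrix ℂ) *
              Matrix.diagonal (fun i => (a j.succ i : ℂ)) *
              ((σ j).permMatrix ℂ)ᵀ) i k := fun i k => by rw [← hM]
      have h2 := h1 i i
      rw [Matrix.sum_apply] at h2
      simp only [conjPerm, Matrix.diagonal_apply_eq] at h2
      exact h2
    exact (keyIff N (Fin.cases (a 0 i) (fun j => a j.succ (σ j i))) (fun k => by
      refine Fin.cases ?_ (fun j => ?_) k <;> simp [ha])).mp
      ⟨fun j => t j i, by simpa using hM'⟩
  · rintro ⟨σ, hineq⟩
    have hex : ∀ i : Fin n, ∃ t : Fin N → ℝ,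
        (a 0 i : ℂ) = ∑ j, Complex.exp (Complex.I * t j) * (a j.succ (σ j i) : ℂ) := fun i => by
      have := (keyIff N (Fin.cases (a 0 i) (fun j => a j.succ (σ j i))) (fun k => by
        refine Fin.cases ?_ (fun j => ?_) k <;> simp [ha])).mpr (hineq i)
      simpa using this
    choose T hT using hex
    refine ⟨σ, fun j i => T i j, ?_⟩
    ext i k
    rw [Matrix.sum_apply]
    simp only [conjPerm]
    by_cases h : i = k
    · subst h
      simp only [Matrix.diagonal_apply_eq]
      exact hT i
    · simp [Matrix.diagonal_apply_ne _ h]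
end

section
/- Let A, B ∈ M_n and let ‖·‖ be any unitarily invariant norm on M_n. Then for all invertible S, T ∈ M_n: ‖((tr A − tr B)/n) · I‖ ≤ ‖S^{-1} A S − T^{-1} B T‖. -/
open Matrix Finset

set_option linter.unusedSectionVars false

namespace Stmt9Aux

variable {n : ℕ} [NeZero n]

/-- Sign of a boolean vector at a coordinate: `±1`. -/
def sgn (ε : Fin n → Bool) (i : Fin n) : ℂ := if ε i then 1 else -1

lemma sgn_mul_self (ε : Fin n → Bool) (i : Fin n) : sgn ε i * sgn ε i = 1 := by
  unfold sgn; split <;> ring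

lemma star_sgn (ε : Fin n → Bool) (i : Fin n) : (starRingEnd ℂ) (sgn ε i) = sgn ε i := by
  unfold sgn; split <;> simp

/-- The unitary matrix combining a sign flip and a cyclic shift. -/
def U (ε : Fin n → Bool) (k : Fin n) : Matrix (Fin n) (Fin n) ℂ :=
  Matrix.of fun a b => if a = b + k then sgn ε b else 0

lemma star_U_apply (ε : Fin n → Bool) (k : Fin n) (a b : Fin n) :
    star (U ε k) a b = if b = a + k then sgn ε a else 0 := by
  simp only [Matrix.star_apply, U, Matrix.of_apply]
  split <;> simp [star_sgn]

lemma U_mem (ε : Fin n → Bool) (k : Fin n) : U ε k ∈ Matrix.unitaryGroup (Fin n) ℂ := by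
  rw [Matrix.mem_unitaryGroup_iff]
  ext a b
  rw [Matrix.mul_apply, Finset.sum_eq_single (a - k)]
  · rw [star_U_apply]
    simp only [U, Matrix.of_apply, sub_add_cancel, if_pos rfl]
    by_cases h : a = b
    · subst h; simp [sgn_mul_self]
    · rw [if_neg (fun hb : b = a => h hb.symm), mul_zero, Matrix.one_apply_ne h]
  · intro c _ hc
    rw [U, Matrix.of_apply, if_neg, zero_mul]
    intro h; exact hc (by rw [h]; simp)
  · simp

lemma conj_apply (ε : Fin n → Bool) (k : Fin n) (X : Matrix (Fin n) (Fin n) ℂ) (a b : Fin n) :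
    (U ε k * X * star (U ε k)) a b = sgn ε (a - k) * sgn ε (b - k) * X (a - k) (b - k) := by
  have h1 : (U ε k * X) a (b - k) = sgn ε (a - k) * X (a - k) (b - k) := by
    rw [Matrix.mul_apply, Finset.sum_eq_single (a - k)]
    · simp [U]
    · intro c _ hc
      rw [U, Matrix.of_apply, if_neg, zero_mul]
      intro h; exact hc (by rw [h]; simp)
    · simp
  rw [Matrix.mul_apply, Finset.sum_eq_single (b - k)]
  · rw [star_U_apply, if_pos (by simp), h1]; ring
  · intro c _ hc
    rw [star_U_apply, if_neg, mul_zero]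
    intro h; exact hc (by rw [h]; simp)
  · simp

lemma sum_sgn (i j : Fin n) :
    ∑ ε : Fin n → Bool, sgn ε i * sgn ε j = if i = j then ((2 : ℂ) ^ n) else 0 := by
  by_cases h : i = j
  · subst h
    rw [if_pos rfl]
    have : ∀ ε : Fin n → Bool, sgn ε i * sgn ε i = 1 := fun ε => sgn_mul_self ε i
    rw [Finset.sum_congr rfl (fun ε _ => this ε), Finset.sum_const]
    simp [Fintype.card_fun]
  · rw [if_neg h]
    refine Finset.sum_ninvolution (fun ε => Function.update ε i (! ε i)) ?_ ?_ (by simp) ?_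
    · intro ε
      have h1 : sgn (Function.update ε i (! ε i)) i = - sgn ε i := by
        unfold sgn
        rw [Function.update_self]
        cases ε i <;> simp
      have h2 : sgn (Function.update ε i (! ε i)) j = sgn ε j := by
        unfold sgn
        rw [Function.update_of_ne (Ne.symm h)]
      rw [h1, h2]; ring
    · intro ε _
      intro hc
      have h2 : Function.update ε i (! ε i) i = ε i := congrFun hc i
      rw [Function.update_self] at h2
      cases ε i <;> simp_all
    · intro ε
      funext x
      by_cases hx : x = i
      · subst hx; simp
      · simp [Function.update_of_ne hx]

lemma sum_conj (X : Matrix (Fin n) (Fin n) ℂ) :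
    ∑ ε : Fin n → Bool, ∑ k : Fin n, U ε k * X * star (U ε k)
      = ((2 : ℂ) ^ n * Matrix.trace X) • (1 : Matrix (Fin n) (Fin n) ℂ) := by
  ext a b
  rw [Matrix.sum_apply]
  simp only [Matrix.sum_apply, conj_apply]
  rw [Finset.sum_comm]
  have inner : ∀ k : Fin n, (∑ ε : Fin n → Bool,
      sgn ε (a - k) * sgn ε (b - k) * X (a - k) (b - k))
      = (if a = b then ((2:ℂ)^n) else 0) * X (a - k) (b - k) := by
    intro k
    rw [← Finset.sum_mul, sum_sgn]
    congr 1
    by_cases h : a = b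
    · subst h; simp
    · rw [if_neg h, if_neg (fun hc => h (by
        have := congrArg (· + k) hc
        simpa using this))]
  rw [Finset.sum_congr rfl (fun k _ => inner k)]
  by_cases h : a = b
  · subst h
    simp only [if_pos rfl]
    rw [← Finset.mul_sum]
    have : ∑ k : Fin n, X (a - k) (a - k) = Matrix.trace X := by
      rw [Matrix.trace]
      exact Fintype.sum_equiv (Equiv.subLeft a) _ _ (fun k => rfl)
    rw [this, Matrix.smul_apply, Matrix.one_apply_eq, smul_eq_mul, mul_one]
    simp
  · simp [h, Matrix.one_apply_ne h]

end Stmt9Aux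

theorem stmt9 {n : ℕ} (hn : 0 < n) (A B : Matrix (Fin n) (Fin n) ℂ)
    (ν : Matrix (Fin n) (Fin n) ℂ → ℝ)
    (hν₀ : ∀ X, ν X = 0 ↔ X = 0)
    (hνadd : ∀ X Y, ν (X + Y) ≤ ν X + ν Y)
    (hνsmul : ∀ (c : ℂ) X, ν (c • X) = ‖c‖ * ν X)
    (hνinv : ∀ X, ∀ U ∈ Matrix.unitaryGroup (Fin n) ℂ, ∀ V ∈ Matrix.unitaryGroup (Fin n) ℂ,
      ν (U * X * V) = ν X)
    (S T : Matrix (Fin n) (Fin n) ℂ) (hS : IsUnit S) (hT : IsUnit T) :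
    ν (((Matrix.trace A - Matrix.trace B) / n) • (1 : Matrix (Fin n) (Fin n) ℂ)) ≤
      ν (S⁻¹ * A * S - T⁻¹ * B * T) := by
  haveI : NeZero n := ⟨hn.ne'⟩
  set X := S⁻¹ * A * S - T⁻¹ * B * T with hX
  have hν0 : ν 0 = 0 := (hν₀ 0).mpr rfl
  -- trace of a conjugation
  have htrS : Matrix.trace (S⁻¹ * A * S) = Matrix.trace A := by
    rw [Matrix.trace_mul_cycle,
      Matrix.mul_nonsing_inv S ((Matrix.isUnit_iff_isUnit_det S).mp hS), Matrix.one_mul]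
  have htrT : Matrix.trace (T⁻¹ * B * T) = Matrix.trace B := by
    rw [Matrix.trace_mul_cycle,
      Matrix.mul_nonsing_inv T ((Matrix.isUnit_iff_isUnit_det T).mp hT), Matrix.one_mul]
  have htr : Matrix.trace X = Matrix.trace A - Matrix.trace B := by
    rw [hX, Matrix.trace_sub, htrS, htrT]
  have hn2 : ((2 : ℂ) ^ n) ≠ 0 := pow_ne_zero _ two_ne_zero
  have hnC : (n : ℂ) ≠ 0 := Nat.cast_ne_zero.mpr hn.ne'
  -- the key averaging identity
  have key : ((Matrix.trace A - Matrix.trace B) / n) • (1 : Matrix (Fin n) (Fin n) ℂ)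
      = ((2 : ℂ) ^ n * n)⁻¹ • ∑ ε : Fin n → Bool, ∑ k : Fin n,
          Stmt9Aux.U ε k * X * star (Stmt9Aux.U ε k) := by
    rw [Stmt9Aux.sum_conj X, smul_smul, htr]
    congr 1
    field_simp
  rw [key, hνsmul]
  have hsub : ν (∑ ε : Fin n → Bool, ∑ k : Fin n,
      Stmt9Aux.U ε k * X * star (Stmt9Aux.U ε k)) ≤ (2 ^ n * n : ℝ) * ν X := by
    calc ν (∑ ε : Fin n → Bool, ∑ k : Fin n, Stmt9Aux.U ε k * X * star (Stmt9Aux.U ε k))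
        ≤ ∑ ε : Fin n → Bool, ν (∑ k : Fin n, Stmt9Aux.U ε k * X * star (Stmt9Aux.U ε k)) :=
          Finset.le_sum_of_subadditive ν hν0.le hνadd _ _
      _ ≤ ∑ ε : Fin n → Bool, ∑ k : Fin n, ν (Stmt9Aux.U ε k * X * star (Stmt9Aux.U ε k)) :=
          Finset.sum_le_sum (fun ε _ => Finset.le_sum_of_subadditive ν hν0.le hνadd _ _)
      _ = ∑ ε : Fin n → Bool, ∑ k : Fin n, ν X := by
          refine Finset.sum_congr rfl (fun ε _ => Finset.sum_congr rfl (fun k _ => ?_))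
          exact hνinv X _ (Stmt9Aux.U_mem ε k) _ (Unitary.star_mem (Stmt9Aux.U_mem ε k))
      _ = (2 ^ n * n : ℝ) * ν X := by
          simp [Finset.sum_const, Fintype.card_fun, mul_assoc]
  have habs : ‖((2 : ℂ) ^ n * n)⁻¹‖ = (2 ^ n * n : ℝ)⁻¹ := by
    rw [norm_inv, norm_mul, norm_pow, Complex.norm_two, Complex.norm_natCast]
  rw [habs]
  have hpos : (0 : ℝ) < 2 ^ n * n := by positivity
  calc (2 ^ n * n : ℝ)⁻¹ * ν (∑ ε : Fin n → Bool, ∑ k : Fin n,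
        Stmt9Aux.U ε k * X * star (Stmt9Aux.U ε k))
      ≤ (2 ^ n * n : ℝ)⁻¹ * ((2 ^ n * n : ℝ) * ν X) := by
        exact mul_le_mul_of_nonneg_left hsub (by positivity)
    _ = ν X := by field_simp
end

section
/- Let A = diag(2, −1, −1) ∈ M_3 and B the 3×3 nilpotent Jordan block with ones on the superdiagonal. Then inf over invertible S, T of ‖S^{-1} A S − T^{-1} B T‖ = 0 (Frobenius norm): there exist invertible S, T with S^{-1}AS − T^{-1}BT a rank-two nilpotent matrix, and any nonzero nilpotent orbit has 0 in its closure. -/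
open Matrix

/-- Frobenius norm of a complex matrix. -/
noncomputable def frob {n : ℕ} (X : Matrix (Fin n) (Fin n) ℂ) : ℝ :=
  Real.sqrt (Matrix.trace (Xᴴ * X)).re

private lemma aux_isUnit (S S' : Matrix (Fin 3) (Fin 3) ℂ) (h : S * S' = 1) : IsUnit S := by
  apply (Matrix.isUnit_iff_isUnit_det S).mpr
  exact IsUnit.of_mul_eq_one _ (by rw [← Matrix.det_mul, h, Matrix.det_one])

/-- Main conjugation lemma: for ε ≠ 0 there are invertible S, T with difference the scaled
lower nilpotent. -/
private lemma aux_main (ε : ℂ) (hε : ε ≠ 0) :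
    ∃ S T : Matrix (Fin 3) (Fin 3) ℂ, IsUnit S ∧ IsUnit T ∧
      S⁻¹ * (Matrix.diagonal ![2, -1, -1]) * S - T⁻¹ * !![0, 1, 0; 0, 0, 1; 0, 0, 0] * T
        = !![0, 0, 0; ε, 0, 0; ε ^ 2, ε, 0] := by
  set A : Matrix (Fin 3) (Fin 3) ℂ := Matrix.diagonal ![2, -1, -1] with hA
  set B : Matrix (Fin 3) (Fin 3) ℂ := !![0, 1, 0; 0, 0, 1; 0, 0, 0] with hB
  have hAe : A = !![2, 0, 0; 0, -1, 0; 0, 0, -1] := by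
    ext i j; fin_cases i <;> fin_cases j <;> rfl
  set S0 : Matrix (Fin 3) (Fin 3) ℂ :=
    !![1/3, 1/3, 1/3; 1/3, -2/3, 1/3; 1/3, 1/3, -2/3] with hS0
  set P : Matrix (Fin 3) (Fin 3) ℂ := !![1, 1, 1; 1, -1, 0; 1, 0, -1] with hP
  set T0 : Matrix (Fin 3) (Fin 3) ℂ := !![1, -1, 0; 0, 1, 0; 0, 0, 1] with hT0
  set Q : Matrix (Fin 3) (Fin 3) ℂ := !![1, 1, 0; 0, 1, 0; 0, 0, 1] with hQ
  set E : Matrix (Fin 3) (Fin 3) ℂ := Matrix.diagonal ![ε ^ 2, ε, 1] with hE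
  set F : Matrix (Fin 3) (Fin 3) ℂ := Matrix.diagonal ![(ε ^ 2)⁻¹, ε⁻¹, 1] with hF
  have hS0P : S0 * P = 1 := by
    rw [hS0, hP, Matrix.mul_fin_three]
    rw [Matrix.one_fin_three]; norm_num
  have hPS0 : P * S0 = 1 := by
    rw [hS0, hP, Matrix.mul_fin_three]
    rw [Matrix.one_fin_three]; norm_num
  have hT0Q : T0 * Q = 1 := by
    rw [hT0, hQ, Matrix.mul_fin_three]
    rw [Matrix.one_fin_three]; norm_num
  have hQT0 : Q * T0 = 1 := by
    rw [hT0, hQ, Matrix.mul_fin_three]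
    rw [Matrix.one_fin_three]; norm_num
  have hEF : E * F = 1 := by
    rw [hE, hF, Matrix.diagonal_mul_diagonal, ← Matrix.diagonal_one]
    refine congrArg _ (funext fun i => ?_)
    fin_cases i <;>
      simp [Matrix.vecHead, Matrix.vecTail, mul_inv_cancel₀ hε,
        mul_inv_cancel₀ (pow_ne_zero 2 hε)]
  have hS0inv : S0⁻¹ = P := Matrix.inv_eq_right_inv hS0P
  have hT0inv : T0⁻¹ = Q := Matrix.inv_eq_right_inv hT0Q
  have hEinv : E⁻¹ = F := Matrix.inv_eq_right_inv hEF
  refine ⟨S0 * E, T0 * E, ?_, ?_, ?_⟩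
  · exact aux_isUnit _ (F * P) (by rw [Matrix.mul_assoc, ← Matrix.mul_assoc E, hEF,
      Matrix.one_mul, hS0P])
  · exact aux_isUnit _ (F * Q) (by rw [Matrix.mul_assoc, ← Matrix.mul_assoc E, hEF,
      Matrix.one_mul, hT0Q])
  · rw [Matrix.mul_inv_rev, Matrix.mul_inv_rev, hS0inv, hT0inv, hEinv]
    have hJ : P * A * S0 = !![0, 1, 1; 1, 0, 1; 1, 1, 0] := by
      rw [hAe, hP, hS0, Matrix.mul_fin_three, Matrix.mul_fin_three]; norm_num
    have hU : Q * B * T0 = !![0, 1, 1; 0, 0, 1; 0, 0, 0] := by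
      rw [hB, hQ, hT0, Matrix.mul_fin_three, Matrix.mul_fin_three]; norm_num
    have key : F * P * A * (S0 * E) - F * Q * B * (T0 * E)
        = F * (P * A * S0 - Q * B * T0) * E := by
      simp only [Matrix.mul_sub, Matrix.sub_mul, Matrix.mul_assoc]
    rw [key, hJ, hU]
    have hD : (!![0, 1, 1; 1, 0, 1; 1, 1, 0] - !![0, 1, 1; 0, 0, 1; 0, 0, 0]
        : Matrix (Fin 3) (Fin 3) ℂ) = !![0, 0, 0; 1, 0, 0; 1, 1, 0] := by
      ext i j; fin_cases i <;> fin_cases j <;> simp [Matrix.vecHead, Matrix.vecTail]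
    rw [hD, hF, hE]
    ext i j
    fin_cases i <;> fin_cases j <;>
      simp [Matrix.mul_apply, Matrix.diagonal, Fin.sum_univ_three, Matrix.vecHead, Matrix.vecTail] <;>
      field_simp <;> ring

private lemma aux_rank : (!![0, 0, 0; 1, 0, 0; 1, 1, 0] : Matrix (Fin 3) (Fin 3) ℂ).rank = 2 := by
  have hE : (!![0, 1, 0; 0, -1, 1; 1, 0, 0] : Matrix (Fin 3) (Fin 3) ℂ) *
      !![0, 0, 0; 1, 0, 0; 1, 1, 0] = Matrix.diagonal ![1, 1, 0] := by
    rw [Matrix.mul_fin_three]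
    ext i j
    fin_cases i <;> fin_cases j <;>
      simp [Matrix.diagonal, Matrix.vecHead, Matrix.vecTail]
  have hdet : IsUnit (!![0, 1, 0; 0, -1, 1; 1, 0, 0] : Matrix (Fin 3) (Fin 3) ℂ).det := by
    rw [Matrix.det_fin_three]
    norm_num
    simp [Matrix.vecHead, Matrix.vecTail]
  have := Matrix.rank_mul_eq_right_of_isUnit_det
    (!![0, 1, 0; 0, -1, 1; 1, 0, 0] : Matrix (Fin 3) (Fin 3) ℂ)
    !![0, 0, 0; 1, 0, 0; 1, 1, 0] hdet
  rw [← this, hE, Matrix.rank_diagonal]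
  have h : ∀ i : Fin 3, (![1, 1, 0] i ≠ (0 : ℂ)) ↔ (i ∈ ({0, 1} : Finset (Fin 3))) := by
    intro i
    fin_cases i <;> simp [Matrix.vecHead, Matrix.vecTail]
  rw [Fintype.card_congr (Equiv.subtypeEquivRight h), Fintype.card_coe]
  decide

private lemma aux_cube : (!![0, 0, 0; 1, 0, 0; 1, 1, 0] : Matrix (Fin 3) (Fin 3) ℂ) ^ 3 = 0 := by
  rw [pow_succ, pow_two, Matrix.mul_fin_three, Matrix.mul_fin_three]
  norm_num
  ext i j
  fin_cases i <;> fin_cases j <;> simp [Matrix.vecHead, Matrix.vecTail]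

private lemma aux_frob (e : ℝ) :
    frob (!![0, 0, 0; (e : ℂ), 0, 0; (e : ℂ) ^ 2, (e : ℂ), 0]) =
      Real.sqrt (2 * e ^ 2 + e ^ 4) := by
  unfold frob
  congr 1
  simp [Matrix.trace_fin_three, Matrix.mul_apply, Fin.sum_univ_three,
    Matrix.conjTranspose_apply, Matrix.vecHead, Matrix.vecTail, ← Complex.ofReal_pow]
  push_cast
  ring

theorem stmt13
    (A : Matrix (Fin 3) (Fin 3) ℂ) (hA : A = Matrix.diagonal ![2, -1, -1])
    (B : Matrix (Fin 3) (Fin 3) ℂ) (hB : B = !![0, 1, 0; 0, 0, 1; 0, 0, 0]) :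
    (∃ S T : Matrix (Fin 3) (Fin 3) ℂ, IsUnit S ∧ IsUnit T ∧
        (S⁻¹ * A * S - T⁻¹ * B * T) ^ 3 = 0 ∧ (S⁻¹ * A * S - T⁻¹ * B * T).rank = 2) ∧
      sInf {x | ∃ S T : Matrix (Fin 3) (Fin 3) ℂ, IsUnit S ∧ IsUnit T ∧
          x = frob (S⁻¹ * A * S - T⁻¹ * B * T)} = 0 := by
  subst hA hB
  constructor
  · obtain ⟨S, T, hS, hT, hdiff⟩ := aux_main 1 one_ne_zero
    refine ⟨S, T, hS, hT, ?_, ?_⟩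
    · rw [hdiff]; norm_num; exact aux_cube
    · rw [hdiff]; norm_num; exact aux_rank
  · set X := {x | ∃ S T : Matrix (Fin 3) (Fin 3) ℂ, IsUnit S ∧ IsUnit T ∧
        x = frob (S⁻¹ * (Matrix.diagonal ![2, -1, -1]) * S
          - T⁻¹ * !![0, 1, 0; 0, 0, 1; 0, 0, 0] * T)} with hX
    have hmem : ∀ e : ℝ, e ≠ 0 → Real.sqrt (2 * e ^ 2 + e ^ 4) ∈ X := by
      intro e he
      obtain ⟨S, T, hS, hT, hdiff⟩ := aux_main (e : ℂ) (by exact_mod_cast he)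
      exact ⟨S, T, hS, hT, by rw [hdiff, aux_frob]⟩
    have hlb : ∀ x ∈ X, (0 : ℝ) ≤ x := by
      rintro x ⟨S, T, _, _, rfl⟩
      exact Real.sqrt_nonneg _
    have hbdd : BddBelow X := ⟨0, hlb⟩
    refine le_antisymm ?_ (le_csInf ⟨_, hmem 1 one_ne_zero⟩ hlb)
    refine le_of_forall_pos_le_add ?_
    intro δ hδ
    set e : ℝ := min (δ / 2) 1 with he
    have he0 : 0 < e := lt_min (by linarith) one_pos
    have he1 : e ≤ 1 := min_le_right _ _
    have heδ : 2 * e ≤ δ := by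
      have : e ≤ δ / 2 := min_le_left _ _
      linarith
    have hval : Real.sqrt (2 * e ^ 2 + e ^ 4) ≤ δ := by
      have he2 : e ^ 2 ≤ 1 := by nlinarith
      have h1 : 2 * e ^ 2 + e ^ 4 ≤ (2 * e) ^ 2 := by nlinarith [sq_nonneg e]
      calc Real.sqrt (2 * e ^ 2 + e ^ 4) ≤ Real.sqrt ((2 * e) ^ 2) :=
            Real.sqrt_le_sqrt h1
        _ = 2 * e := Real.sqrt_sq (by linarith)
        _ ≤ δ := heδ
    calc sInf X ≤ Real.sqrt (2 * e ^ 2 + e ^ 4) := csInf_le hbdd (hmem e (ne_of_gt he0))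
      _ ≤ δ := hval
      _ ≤ 0 + δ := by linarith
end

section
/- Let x = (x_1, ..., x_n) and y = (y_1, ..., y_n) be nonnegative vectors with x weakly majorized by y (for each k, the sum of the k largest entries of x is at most that of y). Then for every unitarily invariant norm ‖·‖ on M_n: ‖diag(x_1, ..., x_n)‖ ≤ ‖diag(y_1, ..., y_n)‖. -/
open Matrix

/-- The maximal sum of `k` entries of a vector: for nonnegative vectors this is the
sum of the `k` largest entries. -/
noncomputable def maxSum {n : ℕ} (v : Fin n → ℝ) (k : ℕ) : ℝ :=
  sSup {x | ∃ s : Finset (Fin n), s.card = k ∧ x = ∑ i ∈ s, v i}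

open Finset

/- extension of a vector on `Fin n` to `ℕ` by zero -/
noncomputable def ext0 {n : ℕ} (v : Fin n → ℝ) : ℕ → ℝ :=
  fun i => if h : i < n then v ⟨i, h⟩ else 0

lemma abel_id (a v : ℕ → ℝ) (m : ℕ) :
    ∑ i ∈ range m, a i * v i
      = ∑ k ∈ range m, (a k - a (k+1)) * (∑ i ∈ range (k+1), v i)
        + a m * ∑ i ∈ range m, v i := by
  induction m with
  | zero => simp
  | succ m ih =>
    rw [Finset.sum_range_succ, ih,
      Finset.sum_range_succ (fun k => (a k - a (k+1)) * (∑ i ∈ range (k+1), v i)),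
      Finset.sum_range_succ v]
    ring

lemma abel_le (n : ℕ) (a u w : ℕ → ℝ)
    (ha : ∀ i j, i ≤ j → a j ≤ a i) (han : a n = 0)
    (h : ∀ k, k ≤ n → ∑ i ∈ range k, u i ≤ ∑ i ∈ range k, w i) :
    ∑ i ∈ range n, a i * u i ≤ ∑ i ∈ range n, a i * w i := by
  rw [abel_id a u n, abel_id a w n, han, zero_mul, zero_mul, add_zero, add_zero]
  refine Finset.sum_le_sum fun k hk => ?_
  have hk' : k + 1 ≤ n := Finset.mem_range.1 hk
  exact mul_le_mul_of_nonneg_left (h (k+1) hk')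
    (sub_nonneg.2 (ha k (k+1) (Nat.le_succ k)))

lemma strictMono_nat_le {k : ℕ} (F : Fin k → ℕ) (hF : StrictMono F) (j : Fin k) :
    (j : ℕ) ≤ F j := by
  have H : ∀ m : ℕ, ∀ j : Fin k, (j : ℕ) = m → m ≤ F j := by
    intro m
    induction m with
    | zero => intro j _; exact Nat.zero_le _
    | succ m ih =>
      intro j hj
      have hm : m < k := by omega
      have h1 : (⟨m, hm⟩ : Fin k) < j := by
        rw [Fin.lt_def]; simp; omega
      have h2 := ih ⟨m, hm⟩ rfl
      have h3 := hF h1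
      omega
  exact H _ j rfl

lemma topk {n k : ℕ} (w : Fin n → ℝ) (hw : Antitone w) (hk : k ≤ n)
    (s : Finset (Fin n)) (hs : s.card = k) :
    ∑ i ∈ s, w i ≤ ∑ i ∈ range k, ext0 w i := by
  classical
  have e := s.orderIsoOfFin hs
  have h1 : ∑ i ∈ s, w i = ∑ j : Fin k, w (e j) := by
    rw [← Finset.sum_attach s w]
    exact (Equiv.sum_comp e.toEquiv (fun x : {x // x ∈ s} => w x)).symm
  have hF : StrictMono (fun j : Fin k => ((e j : Fin n) : ℕ)) := by
    intro i j hij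
    exact Fin.lt_def.1 (e.strictMono hij)
  rw [h1]
  have h2 : ∑ i ∈ range k, ext0 w i = ∑ j : Fin k, w ⟨j, lt_of_lt_of_le j.isLt hk⟩ := by
    rw [← Fin.sum_univ_eq_sum_range (fun i => ext0 w i) k]
    refine Finset.sum_congr rfl fun j _ => ?_
    simp only [ext0]
    rw [dif_pos (lt_of_lt_of_le j.isLt hk)]
  rw [h2]
  refine Finset.sum_le_sum fun j _ => ?_
  exact hw (by
    rw [Fin.le_def]
    exact strictMono_nat_le _ hF j)

lemma le_maxSum {n : ℕ} (v : Fin n → ℝ) {k : ℕ} (s : Finset (Fin n)) (hs : s.card = k) :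
    ∑ i ∈ s, v i ≤ maxSum v k := by
  apply le_csSup
  · have hsub : {x | ∃ s : Finset (Fin n), s.card = k ∧ x = ∑ i ∈ s, v i}
        ⊆ (fun s : Finset (Fin n) => ∑ i ∈ s, v i) '' Set.univ := by
      rintro x ⟨s, -, rfl⟩; exact ⟨s, trivial, rfl⟩
    exact ((Set.finite_univ.image _).subset hsub).bddAbove
  · exact ⟨s, hs, rfl⟩

lemma maxSum_le {n : ℕ} (v : Fin n → ℝ) {k : ℕ} (hk : k ≤ n) {B : ℝ}
    (h : ∀ s : Finset (Fin n), s.card = k → ∑ i ∈ s, v i ≤ B) :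
    maxSum v k ≤ B := by
  apply csSup_le
  · obtain ⟨s, -, hs⟩ := Finset.exists_subset_card_eq
      (s := (Finset.univ : Finset (Fin n))) (n := k) (by simpa using hk)
    exact ⟨_, s, hs, rfl⟩
  · rintro x ⟨s, hs, rfl⟩; exact h s hs

lemma keyK {n : ℕ} (x y : Fin n → ℝ) (hx : ∀ i, 0 ≤ x i)
    (hmaj : ∀ k : ℕ, k ≤ n → maxSum x k ≤ maxSum y k)
    (d : Fin n → ℝ) (hd : ∀ i, 0 ≤ d i) :
    ∃ σ : Equiv.Perm (Fin n), ∑ i, d i * x i ≤ ∑ i, d i * y (σ i) := by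
  classical
  set π := Tuple.sort (fun i => -d i) with hπ
  set τ := Tuple.sort (fun i => -y i) with hτ
  have hda : Antitone (fun i => d (π i)) := by
    intro i j hij
    have := Tuple.monotone_sort (fun i => -d i) hij
    simpa using this
  have hya : Antitone (fun i => y (τ i)) := by
    intro i j hij
    have := Tuple.monotone_sort (fun i => -y i) hij
    simpa using this
  set a : ℕ → ℝ := ext0 (fun i => d (π i)) with haa
  set u : ℕ → ℝ := ext0 (fun i => x (π i)) with huu
  set w : ℕ → ℝ := ext0 (fun i => y (τ i)) with hww
  have ha : ∀ i j, i ≤ j → a j ≤ a i := by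
    intro i j hij
    simp only [haa, ext0]
    by_cases hj : j < n
    · rw [dif_pos hj, dif_pos (lt_of_le_of_lt hij hj)]
      exact hda (by simpa [Fin.le_def] using hij)
    · rw [dif_neg hj]
      by_cases hi : i < n
      · rw [dif_pos hi]; exact hd _
      · rw [dif_neg hi]
  have han : a n = 0 := by simp [haa, ext0]
  -- partial sums of u are ≤ maxSum x k
  have hsum_ext : ∀ (v : Fin n → ℝ) (k : ℕ) (hk : k ≤ n),
      ∑ i ∈ range k, ext0 v i = ∑ j : Fin k, v ⟨j, lt_of_lt_of_le j.isLt hk⟩ := by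
    intro v k hk
    rw [← Fin.sum_univ_eq_sum_range (fun i => ext0 v i) k]
    refine Finset.sum_congr rfl fun j _ => ?_
    simp only [ext0]
    rw [dif_pos (lt_of_lt_of_le j.isLt hk)]
  have hps : ∀ k, k ≤ n → ∑ i ∈ range k, u i ≤ ∑ i ∈ range k, w i := by
    intro k hk
    have h1 : ∑ i ∈ range k, u i ≤ maxSum x k := by
      rw [huu, hsum_ext _ k hk]
      set s : Finset (Fin n) :=
        Finset.image (fun j : Fin k => π ⟨j, lt_of_lt_of_le j.isLt hk⟩) Finset.univ with hss
      have hinj : Function.Injective (fun j : Fin k => π ⟨j, lt_of_lt_of_le j.isLt hk⟩) := by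
        intro i j hij
        have := π.injective hij
        simpa [Fin.ext_iff] using this
      have hcard : s.card = k := by
        rw [hss, Finset.card_image_of_injective _ hinj, Finset.card_univ, Fintype.card_fin]
      have := le_maxSum x s hcard
      rw [hss, Finset.sum_image (fun i _ j _ h => hinj h)] at this
      exact this
    have h2 : maxSum y k ≤ ∑ i ∈ range k, w i := by
      rw [hww]
      refine maxSum_le y hk fun s hs => ?_
      have hcard : (s.image τ.symm).card = k := by
        rw [Finset.card_image_of_injective _ τ.symm.injective, hs]
      have h3 := topk (fun i => y (τ i)) hya hk (s.image τ.symm) hcard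
      rw [Finset.sum_image (fun i _ j _ h => τ.symm.injective h)] at h3
      simpa using h3
    exact h1.trans ((hmaj k hk).trans h2)
  have habel := abel_le n a u w ha han hps
  have hL : ∑ i ∈ range n, a i * u i = ∑ i, d i * x i := by
    rw [← Fin.sum_univ_eq_sum_range (fun i => a i * u i) n]
    rw [← Equiv.sum_comp π (fun i => d i * x i)]
    refine Finset.sum_congr rfl fun j _ => ?_
    simp [haa, huu, ext0, j.isLt]
  refine ⟨π.symm.trans τ, ?_⟩
  have hR : ∑ i ∈ range n, a i * w i = ∑ i, d i * y ((π.symm.trans τ) i) := by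
    rw [← Fin.sum_univ_eq_sum_range (fun i => a i * w i) n]
    rw [← Equiv.sum_comp π (fun i => d i * y ((π.symm.trans τ) i))]
    refine Finset.sum_congr rfl fun j _ => ?_
    simp [haa, hww, ext0, j.isLt, Equiv.trans_apply]
  rw [← hL, ← hR]
  exact habel

lemma mem_conv {n : ℕ} (x y : Fin n → ℝ) (hx : ∀ i, 0 ≤ x i)
    (hmaj : ∀ k : ℕ, k ≤ n → maxSum x k ≤ maxSum y k) :
    x ∈ convexHull ℝ {t : Fin n → ℝ | ∃ σ : Equiv.Perm (Fin n), ∃ e : Fin n → ℝ,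
      (∀ i, e i = 0 ∨ e i = 1) ∧ t = fun i => e i * y (σ i)} := by
  classical
  set T : Set (Fin n → ℝ) := {t : Fin n → ℝ | ∃ σ : Equiv.Perm (Fin n), ∃ e : Fin n → ℝ,
      (∀ i, e i = 0 ∨ e i = 1) ∧ t = fun i => e i * y (σ i)} with hT
  have hTfin : T.Finite := by
    have hsub : T ⊆ Set.range (fun p : Equiv.Perm (Fin n) × (Fin n → Bool) =>
        fun i => (if p.2 i then (1:ℝ) else 0) * y (p.1 i)) := by
      rintro t ⟨σ, e, he, rfl⟩
      refine ⟨(σ, fun i => if e i = 1 then true else false), ?_⟩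
      funext i
      rcases he i with h | h <;> simp [h]
    exact (Set.finite_range _).subset hsub
  by_contra hc
  obtain ⟨f, u, hfu, hux⟩ := geometric_hahn_banach_closed_point
    (convex_convexHull ℝ T) (hTfin.isClosed_convexHull (𝕜 := ℝ)) hc
  set c : Fin n → ℝ := fun i => f (Pi.single i 1) with hc'
  have hf : ∀ v : Fin n → ℝ, f v = ∑ i, v i * c i := by
    intro v
    have hv : v = ∑ i, v i • (Pi.single i 1 : Fin n → ℝ) := by
      funext j
      rw [Finset.sum_apply]
      simp [Pi.single_apply]
    conv_lhs => rw [hv]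
    rw [map_sum]
    refine Finset.sum_congr rfl fun i _ => ?_
    rw [_root_.map_smul]
    simp [hc', smul_eq_mul]
  set d : Fin n → ℝ := fun i => max (c i) 0 with hd'
  obtain ⟨σ, hσ⟩ := keyK x y hx hmaj d (fun i => le_max_right _ _)
  set e : Fin n → ℝ := fun i => if 0 < c i then 1 else 0 with he'
  have ht : (fun i => e i * y (σ i)) ∈ T := by
    refine ⟨σ, e, fun i => ?_, rfl⟩
    by_cases h : 0 < c i <;> simp [he', h]
  have h1 : f (fun i => e i * y (σ i)) = ∑ i, d i * y (σ i) := by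
    rw [hf]
    refine Finset.sum_congr rfl fun i _ => ?_
    by_cases h : 0 < c i
    · simp only [he', hd', if_pos h, max_eq_left h.le]; ring
    · simp only [he', hd', if_neg h, max_eq_right (not_lt.1 h)]; ring
  have h2 : f x ≤ ∑ i, d i * x i := by
    rw [hf]
    refine Finset.sum_le_sum fun i _ => ?_
    rw [mul_comm]
    exact mul_le_mul_of_nonneg_right (le_max_left _ _) (hx i)
  have h3 := hfu _ (subset_convexHull ℝ T ht)
  rw [h1] at h3
  linarith

lemma perm_star {n : ℕ} (σ : Equiv.Perm (Fin n)) :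
    star ((Equiv.toPEquiv σ).toMatrix : Matrix (Fin n) (Fin n) ℂ)
      = (Equiv.toPEquiv σ.symm).toMatrix := by
  ext i j
  rw [star_eq_conjTranspose, conjTranspose_apply]
  simp only [PEquiv.toMatrix_apply, Equiv.toPEquiv_apply, Option.mem_def, Option.some.injEq]
  by_cases h : σ j = i
  · rw [if_pos h, if_pos (by rw [← h]; exact (Equiv.symm_apply_apply σ j).symm ▸ rfl)]
    simp
  · rw [if_neg h, if_neg (fun hh => h (by rw [← hh]; simp))]
    simp

lemma perm_unitary {n : ℕ} (σ : Equiv.Perm (Fin n)) :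
    ((Equiv.toPEquiv σ).toMatrix : Matrix (Fin n) (Fin n) ℂ) ∈ Matrix.unitaryGroup (Fin n) ℂ := by
  rw [Matrix.mem_unitaryGroup_iff']
  rw [perm_star]
  rw [PEquiv.toMatrix_toPEquiv_mul]
  ext i j
  rw [Matrix.submatrix_apply]
  simp only [PEquiv.toMatrix_apply, Equiv.toPEquiv_apply, Option.mem_def, Option.some.injEq,
    Matrix.one_apply, id]
  by_cases h : i = j
  · rw [if_pos (by rw [h]; simp), if_pos h]
  · rw [if_neg (fun hh => h (by rw [← hh]; simp)), if_neg h]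

lemma sign_unitary {n : ℕ} (s : Fin n → ℝ) (hs : ∀ i, s i = 1 ∨ s i = -1) :
    (Matrix.diagonal (fun i => (s i : ℂ)) : Matrix (Fin n) (Fin n) ℂ)
      ∈ Matrix.unitaryGroup (Fin n) ℂ := by
  rw [Matrix.mem_unitaryGroup_iff']
  rw [star_eq_conjTranspose, Matrix.diagonal_conjTranspose, Matrix.diagonal_mul_diagonal]
  have : ∀ i, star (fun i => (s i : ℂ)) i * (s i : ℂ) = 1 := by
    intro i
    rcases hs i with h | h <;> simp [Pi.star_apply, h, Complex.conj_ofReal] <;> norm_num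
  rw [show (fun i => star (fun i => (s i : ℂ)) i * (s i : ℂ)) = fun _ => (1:ℂ) from funext this]
  exact Matrix.diagonal_one

theorem stmt17 {n : ℕ} (x y : Fin n → ℝ) (hx : ∀ i, 0 ≤ x i) (hy : ∀ i, 0 ≤ y i)
    (hmaj : ∀ k : ℕ, k ≤ n → maxSum x k ≤ maxSum y k)
    (ν : Matrix (Fin n) (Fin n) ℂ → ℝ)
    (hν₀ : ∀ X, ν X = 0 ↔ X = 0)
    (hνadd : ∀ X Y, ν (X + Y) ≤ ν X + ν Y)
    (hνsmul : ∀ (c : ℂ) X, ν (c • X) = ‖c‖ * ν X)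
    (hνinv : ∀ X, ∀ U ∈ Matrix.unitaryGroup (Fin n) ℂ, ∀ V ∈ Matrix.unitaryGroup (Fin n) ℂ,
      ν (U * X * V) = ν X) :
    ν (Matrix.diagonal (fun i => (x i : ℂ))) ≤ ν (Matrix.diagonal (fun i => (y i : ℂ))) := by
  classical
  set g : (Fin n → ℝ) → ℝ := fun v => ν (Matrix.diagonal (fun i => (v i : ℂ))) with hg
  -- convexity of g
  have hgc : ConvexOn ℝ Set.univ g := by
    refine ⟨convex_univ, fun v _ w _ a b ha hb hab => ?_⟩
    have hdiag : (Matrix.diagonal (fun i => (((a • v + b • w) i : ℝ) : ℂ))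
        : Matrix (Fin n) (Fin n) ℂ)
        = (a:ℂ) • Matrix.diagonal (fun i => (v i : ℂ))
          + (b:ℂ) • Matrix.diagonal (fun i => (w i : ℂ)) := by
      ext i j
      by_cases h : i = j
      · subst h
        simp only [Matrix.diagonal_apply_eq, Matrix.add_apply, Matrix.smul_apply,
          Pi.add_apply, Pi.smul_apply, smul_eq_mul]
        push_cast
        ring
      · simp [Matrix.diagonal_apply_ne _ h, h]
    simp only [hg, smul_eq_mul]
    rw [hdiag]
    calc ν ((a:ℂ) • Matrix.diagonal (fun i => (v i : ℂ))
          + (b:ℂ) • Matrix.diagonal (fun i => (w i : ℂ)))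
        ≤ ν ((a:ℂ) • Matrix.diagonal (fun i => (v i : ℂ)))
          + ν ((b:ℂ) • Matrix.diagonal (fun i => (w i : ℂ))) := hνadd _ _
      _ = a * ν (Matrix.diagonal (fun i => (v i : ℂ)))
          + b * ν (Matrix.diagonal (fun i => (w i : ℂ))) := by
          rw [hνsmul, hνsmul, Complex.norm_real, Complex.norm_real, Real.norm_eq_abs, Real.norm_eq_abs,
            abs_of_nonneg ha, abs_of_nonneg hb]
  -- permutation invariance
  have hperm : ∀ (σ : Equiv.Perm (Fin n)) (v : Fin n → ℝ), g (fun i => v (σ i)) = g v := by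
    intro σ v
    have hPQ : ((Equiv.toPEquiv σ).toMatrix : Matrix (Fin n) (Fin n) ℂ)
        * Matrix.diagonal (fun i => (v i : ℂ)) * (Equiv.toPEquiv σ.symm).toMatrix
        = Matrix.diagonal (fun i => (v (σ i) : ℂ)) := by
      rw [PEquiv.toMatrix_toPEquiv_mul, PEquiv.mul_toMatrix_toPEquiv, Equiv.symm_symm,
        Matrix.submatrix_submatrix]
      have : (Matrix.diagonal (fun i => (v i : ℂ))).submatrix
          ((σ : Fin n ≃ Fin n) : Fin n → Fin n) ((σ : Fin n ≃ Fin n) : Fin n → Fin n)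
          = Matrix.diagonal ((fun i => (v i : ℂ)) ∘ σ) :=
        Matrix.submatrix_diagonal_equiv _ _
      simpa using this
    have := hνinv (Matrix.diagonal (fun i => (v i : ℂ))) _ (perm_unitary σ)
      _ (perm_unitary σ.symm)
    rw [hPQ] at this
    exact this
  -- masking inequality
  have hmask : ∀ (e v : Fin n → ℝ), (∀ i, e i = 0 ∨ e i = 1) →
      g (fun i => e i * v i) ≤ g v := by
    intro e v he
    set A : Matrix (Fin n) (Fin n) ℂ := Matrix.diagonal (fun i => (v i : ℂ)) with hA
    set s : Fin n → ℝ := fun i => 2 * e i - 1 with hs'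
    have hsu : ∀ i, s i = 1 ∨ s i = -1 := by
      intro i; rcases he i with h | h <;> [right; left] <;> simp [hs', h] <;> ring
    set S : Matrix (Fin n) (Fin n) ℂ := Matrix.diagonal (fun i => (s i : ℂ)) with hS
    have hhalf : (Matrix.diagonal (fun i => ((fun i => e i * v i) i : ℂ))
        : Matrix (Fin n) (Fin n) ℂ) = (2⁻¹ : ℂ) • (A + A * S) := by
      rw [hA, hS, Matrix.diagonal_mul_diagonal]
      ext i j
      by_cases h : i = j
      · subst h
        simp only [Matrix.diagonal_apply_eq, Matrix.smul_apply, Matrix.add_apply,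
          smul_eq_mul, hs']
        push_cast
        ring
      · simp [Matrix.diagonal_apply_ne _ h, h]
    have habs : ‖(2⁻¹ : ℂ)‖ = 2⁻¹ := by
      rw [norm_inv, Complex.norm_two]
    have hAS : ν (A * S) = ν A := by
      have := hνinv A 1 (one_mem _) S (sign_unitary s hsu)
      rw [one_mul] at this
      exact this
    simp only [hg]
    rw [hhalf, hνsmul, habs]
    calc 2⁻¹ * ν (A + A * S) ≤ 2⁻¹ * (ν A + ν (A * S)) := by
          have := hνadd A (A * S); linarith
      _ = ν A := by rw [hAS]; ring
  -- assemble
  have hconv := mem_conv x y hx hmaj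
  obtain ⟨t, ⟨σ, e, he, rfl⟩, hgt⟩ :=
    hgc.exists_ge_of_mem_convexHull (Set.subset_univ _) hconv
  have h1 : g (fun i => e i * y (σ i)) ≤ g (fun i => y (σ i)) :=
    hmask e (fun i => y (σ i)) he
  have h2 : g (fun i => y (σ i)) = g y := hperm σ y
  calc ν (Matrix.diagonal (fun i => (x i : ℂ))) = g x := rfl
    _ ≤ g (fun i => e i * y (σ i)) := hgt
    _ ≤ g y := by rw [← h2]; exact h1
end
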